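/- Let R = ℤ[1/30] be the smallest subring of ℚ containing 1/30 (i.e., Subring.closure {(1/30 : ℚ)}). There is no Kochen–Specker coloring of the symmetric idempotents of the matrix ring M₃(R). -/

import Mathlib

set_option linter.unusedVariables false


open Matrix

/-- A Kochen–Specker coloring of the symmetric idempotents of `M₃(R)`. -/
def IsSymKSColoring {R : Type*} [CommRing R]
    (c : {P : Matrix (Fin 3) (Fin 3) R // Pᵀ = P ∧ P * P = P} → Bool) : Prop :=
  ∀ (k : ℕ) (e : Fin k → {P : Matrix (Fin 3) (Fin 3) R // Pᵀ = P ∧ P * P = P}),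
    (∀ i j : Fin k, i ≠ j →
      (e i : Matrix (Fin 3) (Fin 3) R) * (e j : Matrix (Fin 3) (Fin 3) R) = 0) →
    ((∀ i j : Fin k, c (e i) = true → c (e j) = true → i = j) ∧
      ((∑ i, (e i : Matrix (Fin 3) (Fin 3) R)) = 1 → ∃! i : Fin k, c (e i) = true))

/-- A prime partial ideal of the partial ring `M₃(R)_sym` of symmetric matrices: a subset
of the set of symmetric matrices such that for every commutative subring `C` of `M₃(R)`
consisting of symmetric matrices, the corresponding subset of `C` is a prime ideal. -/
def IsSymPrimePartialIdeal {R : Type*} [CommRing R]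
    (p : Set (Matrix (Fin 3) (Fin 3) R)) : Prop :=
  (∀ A ∈ p, Aᵀ = A) ∧
  ∀ C : Subring (Matrix (Fin 3) (Fin 3) R), (∀ x y : C, x * y = y * x) →
    (∀ x : C, (x : Matrix (Fin 3) (Fin 3) R)ᵀ = (x : Matrix (Fin 3) (Fin 3) R)) →
    ∃ I : Ideal C, I.IsPrime ∧ ∀ x : C, x ∈ I ↔ (x : Matrix (Fin 3) (Fin 3) R) ∈ p

namespace KSproof

abbrev R30 : Subring ℚ := Subring.closure {(1/30 : ℚ)}
abbrev M3Q := Matrix (Fin 3) (Fin 3) ℚ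
abbrev M3R := Matrix (Fin 3) (Fin 3) R30
abbrev SIdem := {P : M3R // Pᵀ = P ∧ P * P = P}

lemma mem900 (m : ℤ) : (m : ℚ) / 900 ∈ R30 := by
  have h : (1/30 : ℚ) ∈ R30 := Subring.subset_closure rfl
  have h2 : (1/900 : ℚ) ∈ R30 := by
    rw [show (1/900 : ℚ) = (1/30) * (1/30) by norm_num]
    exact Subring.mul_mem _ h h
  have h3 := Subring.zsmul_mem _ h2 m
  have he : (m : ℚ) / 900 = m • (1/900 : ℚ) := by
    rw [zsmul_eq_mul]; ring
  rw [he]; exact h3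

def dotQ (u v : Fin 3 → ℚ) : ℚ := u 0 * v 0 + u 1 * v 1 + u 2 * v 2
def projQ (v : Fin 3 → ℚ) : M3Q := of fun i j => v i * v j / dotQ v v
def dz (u v : Fin 3 → ℤ) : ℤ := u 0 * v 0 + u 1 * v 1 + u 2 * v 2
def zc (v : Fin 3 → ℤ) : Fin 3 → ℚ := fun i => (v i : ℚ)

lemma dotQ_cast (u v : Fin 3 → ℤ) : dotQ (zc u) (zc v) = (dz u v : ℚ) := by
  simp [dotQ, dz, zc]

lemma projQ_sym (v : Fin 3 → ℚ) : (projQ v)ᵀ = projQ v := by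
  ext i j; simp [projQ, transpose_apply]; ring

lemma projQ_idem (v : Fin 3 → ℚ) (h : dotQ v v ≠ 0) : projQ v * projQ v = projQ v := by
  ext i j
  simp only [projQ, mul_apply, Fin.sum_univ_three, of_apply]
  rw [div_mul_div_comm, div_mul_div_comm, div_mul_div_comm, ← add_div,
    ← add_div]
  rw [show dotQ v v * dotQ v v = (v 0 * v 0 + v 1 * v 1 + v 2 * v 2) * dotQ v v from by
    simp only [dotQ]]
  rw [show v i * v 0 * (v 0 * v j) + v i * v 1 * (v 1 * v j) + v i * v 2 * (v 2 * v j)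
      = (v i * v j) * (v 0 * v 0 + v 1 * v 1 + v 2 * v 2) from by ring]
  rw [mul_comm (v i * v j), mul_div_mul_left]
  intro h0
  exact h (by simp only [dotQ]; linear_combination h0)

lemma projQ_orth (u v : Fin 3 → ℚ) (h : dotQ u v = 0) : projQ u * projQ v = 0 := by
  ext i j
  simp only [projQ, mul_apply, Fin.sum_univ_three, of_apply, Matrix.zero_apply]
  rw [div_mul_div_comm, div_mul_div_comm, div_mul_div_comm, ← add_div,
    ← add_div]
  rw [show u i * u 0 * (v 0 * v j) + u i * u 1 * (v 1 * v j) + u i * u 2 * (v 2 * v j)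
      = (u i * v j) * (u 0 * v 0 + u 1 * v 1 + u 2 * v 2) from by ring]
  rw [show u 0 * v 0 + u 1 * v 1 + u 2 * v 2 = dotQ u v from rfl, h]
  simp

def liftM (P : M3Q) (h : ∀ i j, P i j ∈ R30) : M3R := of fun i j => ⟨P i j, h i j⟩

def FF : M3R →+* M3Q := (R30.subtype).mapMatrix

lemma map_inj {A B : M3R} (h : FF A = FF B) : A = B := by
  ext i j
  show FF A i j = FF B i j
  rw [h]

lemma lift_sym {P : M3Q} {h} (hs : Pᵀ = P) : (liftM P h)ᵀ = liftM P h := by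
  ext i j
  show P j i = P i j
  exact congrFun (congrFun hs i) j

lemma lift_idem {P : M3Q} {h} (hi : P * P = P) : liftM P h * liftM P h = liftM P h := by
  apply map_inj
  rw [_root_.map_mul]
  show P * P = P
  exact hi

lemma lift_orth {P Q : M3Q} {hP hQ} (h0 : P * Q = 0) : liftM P hP * liftM Q hQ = 0 := by
  apply map_inj
  rw [_root_.map_mul, _root_.map_zero]
  show P * Q = 0
  exact h0

lemma lift_sum1 {P Q S : M3Q} {hP hQ hS} (h1 : P + Q + S = 1) :
    liftM P hP + liftM Q hQ + liftM S hS = 1 := by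
  apply map_inj
  rw [_root_.map_add, _root_.map_add, _root_.map_one]
  show P + Q + S = 1
  exact h1

lemma projQ_mem (v : Fin 3 → ℤ) (d : ℤ) (hNd : dz v v * d = 900) :
    ∀ i j, projQ (zc v) i j ∈ R30 := by
  intro i j
  have hN0 : ((dz v v : ℤ) : ℚ) ≠ 0 := by
    simp only [Int.cast_ne_zero]
    intro h0; rw [h0] at hNd; simp at hNd
  have hd0 : ((d : ℤ) : ℚ) ≠ 0 := by
    simp only [Int.cast_ne_zero]
    intro h0; rw [h0] at hNd; simp at hNd
  have key : projQ (zc v) i j = ((v i * v j * d : ℤ) : ℚ) / 900 := by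
    have e1 : projQ (zc v) i j = (v i : ℚ) * v j / ((dz v v : ℤ) : ℚ) := by
      simp only [projQ, of_apply, dotQ_cast, zc]
    rw [e1, show ((v i * v j * d : ℤ) : ℚ) = ((v i : ℚ) * v j) * d by push_cast; ring,
      show (900 : ℚ) = ((dz v v : ℤ) : ℚ) * d by exact_mod_cast hNd.symm,
      mul_div_mul_right _ _ hd0]
  rw [key]; exact mem900 _


variable {R : Type*} [CommRing R]

abbrev SI (R : Type*) [CommRing R] := {P : Matrix (Fin 3) (Fin 3) R // Pᵀ = P ∧ P * P = P}

def bi (b : Bool) : ℤ := cond b 1 0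

lemma bi01 (b : Bool) : bi b = 0 ∨ bi b = 1 := by cases b <;> simp [bi]

lemma exactly_one_bi {b : Fin 3 → Bool} (h : ∃! i : Fin 3, b i = true) :
    bi (b 0) + bi (b 1) + bi (b 2) = 1 := by
  obtain ⟨i, hi, hu⟩ := h
  have h0 := hu 0
  have h1 := hu 1
  have h2 := hu 2
  by_cases b0 : b 0 = true <;> by_cases b1 : b 1 = true <;> by_cases b2 : b 2 = true <;>
    [ exact absurd ((h0 b0).trans (h1 b1).symm) (by decide);
      exact absurd ((h0 b0).trans (h1 b1).symm) (by decide);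
      exact absurd ((h0 b0).trans (h2 b2).symm) (by decide);
      simp [bi, b0, Bool.eq_false_iff.mpr b1, Bool.eq_false_iff.mpr b2];
      exact absurd ((h1 b1).trans (h2 b2).symm) (by decide);
      simp [bi, b1, Bool.eq_false_iff.mpr b0, Bool.eq_false_iff.mpr b2];
      simp [bi, b2, Bool.eq_false_iff.mpr b0, Bool.eq_false_iff.mpr b1];
      (exfalso; fin_cases i <;> simp_all)]

lemma ks_pair {c : SI R → Bool} (hc : IsSymKSColoring c) (A B : SI R)
    (hAB : (A : Matrix (Fin 3) (Fin 3) R) * B = 0)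
    (hBA : (B : Matrix (Fin 3) (Fin 3) R) * A = 0) :
    bi (c A) + bi (c B) ≤ 1 := by
  obtain ⟨h, -⟩ := hc 2 ![A, B] (by
    intro i j hij
    fin_cases i <;> fin_cases j <;>
      first
        | exact absurd rfl hij
        | exact hAB
        | exact hBA)
  cases hA : c A <;> cases hB : c B <;> try decide
  exact absurd (h 0 1 hA hB) (by decide)

lemma ks_triad {c : SI R → Bool} (hc : IsSymKSColoring c) (A B D : SI R)
    (hAB : (A : Matrix (Fin 3) (Fin 3) R) * B = 0)
    (hBA : (B : Matrix (Fin 3) (Fin 3) R) * A = 0)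
    (hAD : (A : Matrix (Fin 3) (Fin 3) R) * D = 0)
    (hDA : (D : Matrix (Fin 3) (Fin 3) R) * A = 0)
    (hBD : (B : Matrix (Fin 3) (Fin 3) R) * D = 0)
    (hDB : (D : Matrix (Fin 3) (Fin 3) R) * B = 0)
    (hsum : (A : Matrix (Fin 3) (Fin 3) R) + B + D = 1) :
    bi (c A) + bi (c B) + bi (c D) = 1 := by
  obtain ⟨-, hone⟩ := hc 3 ![A, B, D] (by
    intro i j hij
    fin_cases i <;> fin_cases j <;>
      first
        | exact absurd rfl hij
        | exact hAB
        | exact hBA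
        | exact hAD
        | exact hDA
        | exact hBD
        | exact hDB)
  have h1 := hone (by rw [Fin.sum_univ_three]; exact hsum)
  exact exactly_one_bi (b := fun i => c (![A, B, D] i)) h1




def mkE (v : Fin 3 → ℤ) (d : ℤ) (hNd : dz v v * d = 900) : SI R30 :=
  ⟨liftM (projQ (zc v)) (projQ_mem v d hNd),
   lift_sym (projQ_sym _),
   lift_idem (projQ_idem _ (by
     rw [dotQ_cast]
     simp only [ne_eq, Int.cast_eq_zero]
     intro h0
     rw [h0] at hNd
     simp at hNd))⟩

lemma mkE_orth {u v : Fin 3 → ℤ} {du dv : ℤ} {hu hv} (h : dz u v = 0) :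
    ((mkE u du hu : SI R30) : M3R) * ((mkE v dv hv : SI R30) : M3R) = 0 :=
  lift_orth (projQ_orth _ _ (by rw [dotQ_cast, h]; simp))

lemma mkE_sum {u v w : Fin 3 → ℤ} {du dv dw : ℤ} {hu hv hw}
    (hQ : projQ (zc u) + projQ (zc v) + projQ (zc w) = 1) :
    ((mkE u du hu : SI R30) : M3R) + ((mkE v dv hv : SI R30) : M3R)
      + ((mkE w dw hw : SI R30) : M3R) = 1 :=
  lift_sum1 hQ

def w0 : Fin 3 → ℤ := ![0, 0, 1]
def w1 : Fin 3 → ℤ := ![0, 1, -1]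
def w2 : Fin 3 → ℤ := ![0, 1, 0]
def w3 : Fin 3 → ℤ := ![0, 1, 1]
def w4 : Fin 3 → ℤ := ![1, -2, -1]
def w5 : Fin 3 → ℤ := ![1, -2, 0]
def w6 : Fin 3 → ℤ := ![1, -2, 1]
def w7 : Fin 3 → ℤ := ![1, -1, -2]
def w8 : Fin 3 → ℤ := ![1, -1, -1]
def w9 : Fin 3 → ℤ := ![1, -1, 0]
def w10 : Fin 3 → ℤ := ![1, -1, 1]
def w11 : Fin 3 → ℤ := ![1, -1, 2]
def w12 : Fin 3 → ℤ := ![1, 0, -2]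
def w13 : Fin 3 → ℤ := ![1, 0, -1]
def w14 : Fin 3 → ℤ := ![1, 0, 0]
def w15 : Fin 3 → ℤ := ![1, 0, 1]
def w16 : Fin 3 → ℤ := ![1, 0, 2]
def w17 : Fin 3 → ℤ := ![1, 1, -2]
def w18 : Fin 3 → ℤ := ![1, 1, -1]
def w19 : Fin 3 → ℤ := ![1, 1, 0]
def w20 : Fin 3 → ℤ := ![1, 1, 1]
def w21 : Fin 3 → ℤ := ![1, 1, 2]
def w22 : Fin 3 → ℤ := ![1, 2, -1]
def w23 : Fin 3 → ℤ := ![1, 2, 0]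
def w24 : Fin 3 → ℤ := ![1, 2, 1]
def w25 : Fin 3 → ℤ := ![2, -1, -1]
def w26 : Fin 3 → ℤ := ![2, -1, 0]
def w27 : Fin 3 → ℤ := ![2, -1, 1]
def w28 : Fin 3 → ℤ := ![2, 0, -1]
def w29 : Fin 3 → ℤ := ![2, 0, 1]
def w30 : Fin 3 → ℤ := ![2, 1, -1]
def w31 : Fin 3 → ℤ := ![2, 1, 0]
def w32 : Fin 3 → ℤ := ![2, 1, 1]
def E0 : SI R30 := mkE w0 900 (by decide)
def E1 : SI R30 := mkE w1 450 (by decide)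
def E2 : SI R30 := mkE w2 900 (by decide)
def E3 : SI R30 := mkE w3 450 (by decide)
def E4 : SI R30 := mkE w4 150 (by decide)
def E5 : SI R30 := mkE w5 180 (by decide)
def E6 : SI R30 := mkE w6 150 (by decide)
def E7 : SI R30 := mkE w7 150 (by decide)
def E8 : SI R30 := mkE w8 300 (by decide)
def E9 : SI R30 := mkE w9 450 (by decide)
def E10 : SI R30 := mkE w10 300 (by decide)
def E11 : SI R30 := mkE w11 150 (by decide)
def E12 : SI R30 := mkE w12 180 (by decide)
def E13 : SI R30 := mkE w13 450 (by decide)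
def E14 : SI R30 := mkE w14 900 (by decide)
def E15 : SI R30 := mkE w15 450 (by decide)
def E16 : SI R30 := mkE w16 180 (by decide)
def E17 : SI R30 := mkE w17 150 (by decide)
def E18 : SI R30 := mkE w18 300 (by decide)
def E19 : SI R30 := mkE w19 450 (by decide)
def E20 : SI R30 := mkE w20 300 (by decide)
def E21 : SI R30 := mkE w21 150 (by decide)
def E22 : SI R30 := mkE w22 150 (by decide)
def E23 : SI R30 := mkE w23 180 (by decide)
def E24 : SI R30 := mkE w24 150 (by decide)
def E25 : SI R30 := mkE w25 150 (by decide)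
def E26 : SI R30 := mkE w26 180 (by decide)
def E27 : SI R30 := mkE w27 150 (by decide)
def E28 : SI R30 := mkE w28 180 (by decide)
def E29 : SI R30 := mkE w29 180 (by decide)
def E30 : SI R30 := mkE w30 150 (by decide)
def E31 : SI R30 := mkE w31 180 (by decide)
def E32 : SI R30 := mkE w32 150 (by decide)

lemma core (x0 : ℤ) (x1 : ℤ) (x2 : ℤ) (x3 : ℤ) (x4 : ℤ) (x5 : ℤ) (x6 : ℤ) (x7 : ℤ) (x8 : ℤ) (x9 : ℤ) (x10 : ℤ) (x11 : ℤ) (x12 : ℤ) (x13 : ℤ) (x14 : ℤ) (x15 : ℤ) (x16 : ℤ) (x17 : ℤ) (x18 : ℤ) (x19 : ℤ) (x20 : ℤ) (x21 : ℤ) (x22 : ℤ) (x23 : ℤ) (x24 : ℤ) (x25 : ℤ) (x26 : ℤ) (x27 : ℤ) (x28 : ℤ) (x29 : ℤ) (x30 : ℤ) (x31 : ℤ) (x32 : ℤ)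
    (hb0 : x0 = 0 ∨ x0 = 1) (hb1 : x1 = 0 ∨ x1 = 1) (hb2 : x2 = 0 ∨ x2 = 1) (hb3 : x3 = 0 ∨ x3 = 1) (hb4 : x4 = 0 ∨ x4 = 1) (hb5 : x5 = 0 ∨ x5 = 1) (hb6 : x6 = 0 ∨ x6 = 1) (hb7 : x7 = 0 ∨ x7 = 1) (hb8 : x8 = 0 ∨ x8 = 1) (hb9 : x9 = 0 ∨ x9 = 1) (hb10 : x10 = 0 ∨ x10 = 1) (hb11 : x11 = 0 ∨ x11 = 1) (hb12 : x12 = 0 ∨ x12 = 1) (hb13 : x13 = 0 ∨ x13 = 1) (hb14 : x14 = 0 ∨ x14 = 1) (hb15 : x15 = 0 ∨ x15 = 1) (hb16 : x16 = 0 ∨ x16 = 1) (hb17 : x17 = 0 ∨ x17 = 1) (hb18 : x18 = 0 ∨ x18 = 1) (hb19 : x19 = 0 ∨ x19 = 1) (hb20 : x20 = 0 ∨ x20 = 1) (hb21 : x21 = 0 ∨ x21 = 1) (hb22 : x22 = 0 ∨ x22 = 1) (hb23 : x23 = 0 ∨ x23 = 1) (hb24 : x24 = 0 ∨ x24 = 1)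 (hb25 : x25 = 0 ∨ x25 = 1) (hb26 : x26 = 0 ∨ x26 = 1) (hb27 : x27 = 0 ∨ x27 = 1) (hb28 : x28 = 0 ∨ x28 = 1) (hb29 : x29 = 0 ∨ x29 = 1) (hb30 : x30 = 0 ∨ x30 = 1) (hb31 : x31 = 0 ∨ x31 = 1) (hb32 : x32 = 0 ∨ x32 = 1)
    (ht0 : x0 + x2 + x14 = 1)
    (ht1 : x0 + x5 + x31 = 1)
    (ht2 : x0 + x9 + x19 = 1)
    (ht3 : x0 + x23 + x26 = 1)
    (ht4 : x1 + x3 + x14 = 1)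
    (ht5 : x1 + x8 + x32 = 1)
    (ht6 : x1 + x20 + x25 = 1)
    (ht7 : x2 + x12 + x29 = 1)
    (ht8 : x2 + x13 + x15 = 1)
    (ht9 : x2 + x16 + x28 = 1)
    (ht10 : x3 + x10 + x30 = 1)
    (ht11 : x3 + x18 + x27 = 1)
    (ht12 : x4 + x15 + x18 = 1)
    (ht13 : x6 + x13 + x20 = 1)
    (ht14 : x7 + x10 + x19 = 1)
    (ht15 : x8 + x11 + x19 = 1)
    (ht16 : x8 + x15 + x22 = 1)
    (ht17 : x9 + x17 + x20 = 1)
    (ht18 : x9 + x18 + x21 = 1)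
    (ht19 : x10 + x13 + x24 = 1)
    (hp0 : x0 + x2 ≤ 1)
    (hp1 : x0 + x5 ≤ 1)
    (hp2 : x0 + x9 ≤ 1)
    (hp3 : x0 + x14 ≤ 1)
    (hp4 : x0 + x19 ≤ 1)
    (hp5 : x0 + x23 ≤ 1)
    (hp6 : x0 + x26 ≤ 1)
    (hp7 : x0 + x31 ≤ 1)
    (hp8 : x1 + x3 ≤ 1)
    (hp9 : x1 + x8 ≤ 1)
    (hp10 : x1 + x14 ≤ 1)
    (hp11 : x1 + x20 ≤ 1)
    (hp12 : x1 + x25 ≤ 1)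
    (hp13 : x1 + x32 ≤ 1)
    (hp14 : x2 + x12 ≤ 1)
    (hp15 : x2 + x13 ≤ 1)
    (hp16 : x2 + x14 ≤ 1)
    (hp17 : x2 + x15 ≤ 1)
    (hp18 : x2 + x16 ≤ 1)
    (hp19 : x2 + x28 ≤ 1)
    (hp20 : x2 + x29 ≤ 1)
    (hp21 : x3 + x10 ≤ 1)
    (hp22 : x3 + x14 ≤ 1)
    (hp23 : x3 + x18 ≤ 1)
    (hp24 : x3 + x27 ≤ 1)
    (hp25 : x3 + x30 ≤ 1)
    (hp26 : x4 + x15 ≤ 1)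
    (hp27 : x4 + x18 ≤ 1)
    (hp28 : x4 + x31 ≤ 1)
    (hp29 : x5 + x30 ≤ 1)
    (hp30 : x5 + x31 ≤ 1)
    (hp31 : x5 + x32 ≤ 1)
    (hp32 : x6 + x13 ≤ 1)
    (hp33 : x6 + x20 ≤ 1)
    (hp34 : x6 + x31 ≤ 1)
    (hp35 : x7 + x10 ≤ 1)
    (hp36 : x7 + x19 ≤ 1)
    (hp37 : x7 + x29 ≤ 1)
    (hp38 : x8 + x11 ≤ 1)
    (hp39 : x8 + x15 ≤ 1)
    (hp40 : x8 + x19 ≤ 1)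
    (hp41 : x8 + x22 ≤ 1)
    (hp42 : x8 + x32 ≤ 1)
    (hp43 : x9 + x17 ≤ 1)
    (hp44 : x9 + x18 ≤ 1)
    (hp45 : x9 + x19 ≤ 1)
    (hp46 : x9 + x20 ≤ 1)
    (hp47 : x9 + x21 ≤ 1)
    (hp48 : x10 + x13 ≤ 1)
    (hp49 : x10 + x19 ≤ 1)
    (hp50 : x10 + x24 ≤ 1)
    (hp51 : x10 + x30 ≤ 1)
    (hp52 : x11 + x19 ≤ 1)
    (hp53 : x11 + x28 ≤ 1)
    (hp54 : x12 + x27 ≤ 1)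
    (hp55 : x12 + x29 ≤ 1)
    (hp56 : x12 + x32 ≤ 1)
    (hp57 : x13 + x15 ≤ 1)
    (hp58 : x13 + x20 ≤ 1)
    (hp59 : x13 + x24 ≤ 1)
    (hp60 : x15 + x18 ≤ 1)
    (hp61 : x15 + x22 ≤ 1)
    (hp62 : x16 + x25 ≤ 1)
    (hp63 : x16 + x28 ≤ 1)
    (hp64 : x16 + x30 ≤ 1)
    (hp65 : x17 + x20 ≤ 1)
    (hp66 : x17 + x29 ≤ 1)
    (hp67 : x18 + x21 ≤ 1)
    (hp68 : x18 + x27 ≤ 1)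
    (hp69 : x20 + x25 ≤ 1)
    (hp70 : x21 + x28 ≤ 1)
    (hp71 : x22 + x26 ≤ 1)
    (hp72 : x23 + x25 ≤ 1)
    (hp73 : x23 + x26 ≤ 1)
    (hp74 : x23 + x27 ≤ 1)
    (hp75 : x24 + x26 ≤ 1)
    : False := by
  rcases hb0 with h0 | h0
  ·
    rcases hb2 with h2 | h2
    ·
      rcases hb14 with h14 | h14
      ·
        exact absurd ht0 (by rw [h0, h2, h14]; norm_num)
      rcases hb1 with h1 | h1
      ·
        rcases hb3 with h3 | h3
        ·
          rcases hb9 with h9 | h9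
          ·
            rcases hb19 with h19 | h19
            ·
              exact absurd ht2 (by rw [h0, h9, h19]; norm_num)
            rcases hb7 with h7 | h7
            ·
              rcases hb10 with h10 | h10
              ·
                rcases hb30 with h30 | h30
                ·
                  exact absurd ht10 (by rw [h3, h10, h30]; norm_num)
                rcases hb8 with h8 | h8
                ·
                  rcases hb32 with h32 | h32
                  ·
                    exact absurd ht5 (by rw [h1, h8, h32]; norm_num)
                  rcases hb11 with h11 | h11
                  ·
                    rcases hb5 with h5 | h5
                    ·
                      rcases hb31 with h31 | h31
                      ·
                        exact absurd ht1 (by rw [h0, h5, h31]; norm_num)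
                      rcases hb4 with h4 | h4
                      ·
                        rcases hb6 with h6 | h6
                        ·
                          rcases hb12 with h12 | h12
                          ·
                            rcases hb29 with h29 | h29
                            ·
                              exact absurd ht7 (by rw [h2, h12, h29]; norm_num)
                            rcases hb16 with h16 | h16
                            ·
                              rcases hb28 with h28 | h28
                              ·
                                exact absurd ht9 (by rw [h2, h16, h28]; norm_num)
                              rcases hb17 with h17 | h17
                              ·
                                rcases hb20 with h20 | h20
                                ·
                                  exact absurd ht17 (by rw [h9, h17, h20]; norm_num)
                                rcases hb25 with h25 | h25
                                ·
                                  rcases hb13 with h13 | h13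
                                  ·
                                    rcases hb15 with h15 | h15
                                    ·
                                      exact absurd ht8 (by rw [h2, h13, h15]; norm_num)
                                    rcases hb18 with h18 | h18
                                    ·
                                      rcases hb27 with h27 | h27
                                      ·
                                        exact absurd ht11 (by rw [h3, h18, h27]; norm_num)
                                      rcases hb22 with h22 | h22
                                      ·
                                        rcases hb21 with h21 | h21
                                        ·
                                          exact absurd ht18 (by rw [h9, h18, h21]; norm_num)
                                        rcases hb24 with h24 | h24
                                        ·
                                          exact absurd ht19 (by rw [h10, h13, h24]; norm_num)
                                        exact absurd hp70 (by rw [h21, h28]; norm_num)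
                                      exact absurd ht16 (by rw [h8, h15, h22]; norm_num)
                                    exact absurd ht12 (by rw [h4, h15, h18]; norm_num)
                                  exact absurd ht13 (by rw [h6, h13, h20]; norm_num)
                                exact absurd ht6 (by rw [h1, h20, h25]; norm_num)
                              exact absurd hp66 (by rw [h17, h29]; norm_num)
                            exact absurd hp64 (by rw [h16, h30]; norm_num)
                          exact absurd hp56 (by rw [h12, h32]; norm_num)
                        exact absurd hp34 (by rw [h6, h31]; norm_num)
                      exact absurd hp28 (by rw [h4, h31]; norm_num)
                    exact absurd hp29 (by rw [h5, h30]; norm_num)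
                  exact absurd ht15 (by rw [h8, h11, h19]; norm_num)
                rcases hb11 with h11 | h11 <;> exact absurd ht15 (by rw [h8, h11, h19]; norm_num)
              exact absurd ht14 (by rw [h7, h10, h19]; norm_num)
            rcases hb10 with h10 | h10 <;> exact absurd ht14 (by rw [h7, h10, h19]; norm_num)
          rcases hb19 with h19 | h19
          ·
            rcases hb17 with h17 | h17
            ·
              rcases hb20 with h20 | h20
              ·
                rcases hb25 with h25 | h25
                ·
                  exact absurd ht6 (by rw [h1, h20, h25]; norm_num)
                rcases hb18 with h18 | h18
                ·
                  rcases hb27 with h27 | h27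
                  ·
                    exact absurd ht11 (by rw [h3, h18, h27]; norm_num)
                  rcases hb21 with h21 | h21
                  ·
                    rcases hb12 with h12 | h12
                    ·
                      rcases hb29 with h29 | h29
                      ·
                        exact absurd ht7 (by rw [h2, h12, h29]; norm_num)
                      rcases hb7 with h7 | h7
                      ·
                        rcases hb10 with h10 | h10
                        ·
                          exact absurd ht14 (by rw [h7, h10, h19]; norm_num)
                        rcases hb30 with h30 | h30
                        ·
                          rcases hb13 with h13 | h13
                          ·
                            rcases hb15 with h15 | h15
                            ·
                              exact absurd ht8 (by rw [h2, h13, h15]; norm_num)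
                            rcases hb4 with h4 | h4
                            ·
                              rcases hb6 with h6 | h6
                              ·
                                exact absurd ht13 (by rw [h6, h13, h20]; norm_num)
                              rcases hb8 with h8 | h8
                              ·
                                rcases hb32 with h32 | h32
                                ·
                                  exact absurd ht5 (by rw [h1, h8, h32]; norm_num)
                                rcases hb11 with h11 | h11
                                ·
                                  exact absurd ht15 (by rw [h8, h11, h19]; norm_num)
                                rcases hb22 with h22 | h22
                                ·
                                  rcases hb24 with h24 | h24
                                  ·
                                    rcases hb5 with h5 | h5
                                    ·
                                      rcases hb31 with h31 | h31
                                      ·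
                                        exact absurd ht1 (by rw [h0, h5, h31]; norm_num)
                                      exact absurd hp34 (by rw [h6, h31]; norm_num)
                                    exact absurd hp31 (by rw [h5, h32]; norm_num)
                                  exact absurd ht19 (by rw [h10, h13, h24]; norm_num)
                                exact absurd ht16 (by rw [h8, h15, h22]; norm_num)
                              rcases hb22 with h22 | h22 <;> exact absurd ht16 (by rw [h8, h15, h22]; norm_num)
                            exact absurd ht12 (by rw [h4, h15, h18]; norm_num)
                          rcases hb24 with h24 | h24 <;> exact absurd ht19 (by rw [h10, h13, h24]; norm_num)
                        exact absurd ht10 (by rw [h3, h10, h30]; norm_num)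
                      exact absurd hp37 (by rw [h7, h29]; norm_num)
                    exact absurd hp54 (by rw [h12, h27]; norm_num)
                  exact absurd ht18 (by rw [h9, h18, h21]; norm_num)
                rcases hb21 with h21 | h21 <;> exact absurd ht18 (by rw [h9, h18, h21]; norm_num)
              exact absurd ht17 (by rw [h9, h17, h20]; norm_num)
            rcases hb20 with h20 | h20 <;> exact absurd ht17 (by rw [h9, h17, h20]; norm_num)
          exact absurd ht2 (by rw [h0, h9, h19]; norm_num)
        exact absurd ht4 (by rw [h1, h3, h14]; norm_num)
      rcases hb3 with h3 | h3 <;> exact absurd ht4 (by rw [h1, h3, h14]; norm_num)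
    rcases hb14 with h14 | h14
    ·
      rcases hb12 with h12 | h12
      ·
        rcases hb29 with h29 | h29
        ·
          rcases hb13 with h13 | h13
          ·
            rcases hb15 with h15 | h15
            ·
              rcases hb16 with h16 | h16
              ·
                rcases hb28 with h28 | h28
                ·
                  rcases hb9 with h9 | h9
                  ·
                    rcases hb19 with h19 | h19
                    ·
                      exact absurd ht2 (by rw [h0, h9, h19]; norm_num)
                    rcases hb7 with h7 | h7
                    ·
                      rcases hb10 with h10 | h10
                      ·
                        rcases hb8 with h8 | h8
                        ·
                          rcases hb11 with h11 | h11
                          ·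
                            rcases hb22 with h22 | h22
                            ·
                              exact absurd ht16 (by rw [h8, h15, h22]; norm_num)
                            rcases hb24 with h24 | h24
                            ·
                              exact absurd ht19 (by rw [h10, h13, h24]; norm_num)
                            rcases hb26 with h26 | h26
                            ·
                              rcases hb23 with h23 | h23
                              ·
                                exact absurd ht3 (by rw [h0, h23, h26]; norm_num)
                              rcases hb25 with h25 | h25
                              ·
                                rcases hb27 with h27 | h27
                                ·
                                  rcases hb1 with h1 | h1
                                  ·
                                    rcases hb3 with h3 | h3
                                    ·
                                      exact absurd ht4 (by rw [h1, h3, h14]; norm_num)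
                                    rcases hb32 with h32 | h32
                                    ·
                                      exact absurd ht5 (by rw [h1, h8, h32]; norm_num)
                                    rcases hb20 with h20 | h20
                                    ·
                                      exact absurd ht6 (by rw [h1, h20, h25]; norm_num)
                                    rcases hb30 with h30 | h30
                                    ·
                                      rcases hb18 with h18 | h18
                                      ·
                                        rcases hb4 with h4 | h4
                                        ·
                                          exact absurd ht12 (by rw [h4, h15, h18]; norm_num)
                                        rcases hb6 with h6 | h6
                                        ·
                                          rcases hb17 with h17 | h17
                                          ·
                                            rcases hb21 with h21 | h21
                                            ·
                                              exact absurd ht18 (by rw [h9, h18, h21]; norm_num)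
                                            rcases hb31 with h31 | h31
                                            ·
                                              rcases hb5 with h5 | h5
                                              ·
                                                exact absurd ht1 (by rw [h0, h5, h31]; norm_num)
                                              exact absurd hp31 (by rw [h5, h32]; norm_num)
                                            exact absurd hp28 (by rw [h4, h31]; norm_num)
                                          exact absurd ht17 (by rw [h9, h17, h20]; norm_num)
                                        exact absurd ht13 (by rw [h6, h13, h20]; norm_num)
                                      exact absurd ht11 (by rw [h3, h18, h27]; norm_num)
                                    exact absurd ht10 (by rw [h3, h10, h30]; norm_num)
                                  rcases hb3 with h3 | h3
                                  ·
                                    rcases hb32 with h32 | h32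
                                    ·
                                      rcases hb20 with h20 | h20
                                      ·
                                        rcases hb30 with h30 | h30
                                        ·
                                          exact absurd ht10 (by rw [h3, h10, h30]; norm_num)
                                        rcases hb18 with h18 | h18
                                        ·
                                          exact absurd ht11 (by rw [h3, h18, h27]; norm_num)
                                        rcases hb4 with h4 | h4
                                        ·
                                          rcases hb6 with h6 | h6
                                          ·
                                            exact absurd ht13 (by rw [h6, h13, h20]; norm_num)
                                          rcases hb17 with h17 | h17
                                          ·
                                            exact absurd ht17 (by rw [h9, h17, h20]; norm_num)
                                          rcases hb21 with h21 | h21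
                                          ·
                                            rcases hb5 with h5 | h5
                                            ·
                                              rcases hb31 with h31 | h31
                                              ·
                                                exact absurd ht1 (by rw [h0, h5, h31]; norm_num)
                                              exact absurd hp34 (by rw [h6, h31]; norm_num)
                                            exact absurd hp29 (by rw [h5, h30]; norm_num)
                                          exact absurd ht18 (by rw [h9, h18, h21]; norm_num)
                                        exact absurd ht12 (by rw [h4, h15, h18]; norm_num)
                                      exact absurd ht6 (by rw [h1, h20, h25]; norm_num)
                                    exact absurd ht5 (by rw [h1, h8, h32]; norm_num)
                                  exact absurd ht4 (by rw [h1, h3, h14]; norm_num)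
                                exact absurd hp74 (by rw [h23, h27]; norm_num)
                              exact absurd hp72 (by rw [h23, h25]; norm_num)
                            exact absurd hp71 (by rw [h22, h26]; norm_num)
                          exact absurd ht15 (by rw [h8, h11, h19]; norm_num)
                        rcases hb11 with h11 | h11 <;> exact absurd ht15 (by rw [h8, h11, h19]; norm_num)
                      exact absurd ht14 (by rw [h7, h10, h19]; norm_num)
                    rcases hb10 with h10 | h10 <;> exact absurd ht14 (by rw [h7, h10, h19]; norm_num)
                  rcases hb19 with h19 | h19
                  ·
                    rcases hb17 with h17 | h17
                    ·
                      rcases hb20 with h20 | h20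
                      ·
                        rcases hb6 with h6 | h6
                        ·
                          exact absurd ht13 (by rw [h6, h13, h20]; norm_num)
                        rcases hb18 with h18 | h18
                        ·
                          rcases hb4 with h4 | h4
                          ·
                            exact absurd ht12 (by rw [h4, h15, h18]; norm_num)
                          rcases hb21 with h21 | h21
                          ·
                            rcases hb31 with h31 | h31
                            ·
                              rcases hb5 with h5 | h5
                              ·
                                exact absurd ht1 (by rw [h0, h5, h31]; norm_num)
                              rcases hb30 with h30 | h30
                              ·
                                rcases hb32 with h32 | h32
                                ·
                                  rcases hb1 with h1 | h1
                                  ·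
                                    rcases hb3 with h3 | h3
                                    ·
                                      exact absurd ht4 (by rw [h1, h3, h14]; norm_num)
                                    rcases hb8 with h8 | h8
                                    ·
                                      exact absurd ht5 (by rw [h1, h8, h32]; norm_num)
                                    rcases hb25 with h25 | h25
                                    ·
                                      exact absurd ht6 (by rw [h1, h20, h25]; norm_num)
                                    rcases hb10 with h10 | h10
                                    ·
                                      rcases hb27 with h27 | h27
                                      ·
                                        rcases hb7 with h7 | h7
                                        ·
                                          exact absurd ht14 (by rw [h7, h10, h19]; norm_num)
                                        rcases hb11 with h11 | h11
                                        ·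
                                          rcases hb22 with h22 | h22
                                          ·
                                            rcases hb24 with h24 | h24
                                            ·
                                              exact absurd ht19 (by rw [h10, h13, h24]; norm_num)
                                            rcases hb23 with h23 | h23
                                            ·
                                              rcases hb26 with h26 | h26
                                              ·
                                                exact absurd ht3 (by rw [h0, h23, h26]; norm_num)
                                              exact absurd hp75 (by rw [h24, h26]; norm_num)
                                            exact absurd hp72 (by rw [h23, h25]; norm_num)
                                          exact absurd ht16 (by rw [h8, h15, h22]; norm_num)
                                        exact absurd ht15 (by rw [h8, h11, h19]; norm_num)
                                      exact absurd ht11 (by rw [h3, h18, h27]; norm_num)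
                                    exact absurd ht10 (by rw [h3, h10, h30]; norm_num)
                                  rcases hb3 with h3 | h3
                                  ·
                                    rcases hb8 with h8 | h8
                                    ·
                                      rcases hb25 with h25 | h25
                                      ·
                                        rcases hb10 with h10 | h10
                                        ·
                                          exact absurd ht10 (by rw [h3, h10, h30]; norm_num)
                                        rcases hb27 with h27 | h27
                                        ·
                                          exact absurd ht11 (by rw [h3, h18, h27]; norm_num)
                                        rcases hb7 with h7 | h7
                                        ·
                                          rcases hb11 with h11 | h11
                                          ·
                                            exact absurd ht15 (by rw [h8, h11, h19]; norm_num)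
                                          rcases hb22 with h22 | h22
                                          ·
                                            exact absurd ht16 (by rw [h8, h15, h22]; norm_num)
                                          rcases hb24 with h24 | h24
                                          ·
                                            rcases hb26 with h26 | h26
                                            ·
                                              rcases hb23 with h23 | h23
                                              ·
                                                exact absurd ht3 (by rw [h0, h23, h26]; norm_num)
                                              exact absurd hp74 (by rw [h23, h27]; norm_num)
                                            exact absurd hp71 (by rw [h22, h26]; norm_num)
                                          exact absurd ht19 (by rw [h10, h13, h24]; norm_num)
                                        exact absurd ht14 (by rw [h7, h10, h19]; norm_num)
                                      exact absurd ht6 (by rw [h1, h20, h25]; norm_num)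
                                    exact absurd ht5 (by rw [h1, h8, h32]; norm_num)
                                  exact absurd ht4 (by rw [h1, h3, h14]; norm_num)
                                exact absurd hp31 (by rw [h5, h32]; norm_num)
                              exact absurd hp29 (by rw [h5, h30]; norm_num)
                            exact absurd hp28 (by rw [h4, h31]; norm_num)
                          exact absurd ht18 (by rw [h9, h18, h21]; norm_num)
                        rcases hb21 with h21 | h21 <;> exact absurd ht18 (by rw [h9, h18, h21]; norm_num)
                      exact absurd ht17 (by rw [h9, h17, h20]; norm_num)
                    rcases hb20 with h20 | h20 <;> exact absurd ht17 (by rw [h9, h17, h20]; norm_num)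
                  exact absurd ht2 (by rw [h0, h9, h19]; norm_num)
                exact absurd ht9 (by rw [h2, h16, h28]; norm_num)
              rcases hb28 with h28 | h28 <;> exact absurd ht9 (by rw [h2, h16, h28]; norm_num)
            exact absurd ht8 (by rw [h2, h13, h15]; norm_num)
          rcases hb15 with h15 | h15 <;> exact absurd ht8 (by rw [h2, h13, h15]; norm_num)
        exact absurd ht7 (by rw [h2, h12, h29]; norm_num)
      rcases hb29 with h29 | h29 <;> exact absurd ht7 (by rw [h2, h12, h29]; norm_num)
    exact absurd ht0 (by rw [h0, h2, h14]; norm_num)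
  rcases hb2 with h2 | h2
  ·
    rcases hb14 with h14 | h14
    ·
      rcases hb5 with h5 | h5
      ·
        rcases hb31 with h31 | h31
        ·
          rcases hb9 with h9 | h9
          ·
            rcases hb19 with h19 | h19
            ·
              rcases hb23 with h23 | h23
              ·
                rcases hb26 with h26 | h26
                ·
                  rcases hb1 with h1 | h1
                  ·
                    rcases hb3 with h3 | h3
                    ·
                      exact absurd ht4 (by rw [h1, h3, h14]; norm_num)
                    rcases hb10 with h10 | h10
                    ·
                      rcases hb30 with h30 | h30
                      ·
                        rcases hb18 with h18 | h18
                        ·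
                          rcases hb27 with h27 | h27
                          ·
                            rcases hb7 with h7 | h7
                            ·
                              exact absurd ht14 (by rw [h7, h10, h19]; norm_num)
                            rcases hb21 with h21 | h21
                            ·
                              exact absurd ht18 (by rw [h9, h18, h21]; norm_num)
                            rcases hb29 with h29 | h29
                            ·
                              rcases hb12 with h12 | h12
                              ·
                                exact absurd ht7 (by rw [h2, h12, h29]; norm_num)
                              rcases hb32 with h32 | h32
                              ·
                                rcases hb8 with h8 | h8
                                ·
                                  exact absurd ht5 (by rw [h1, h8, h32]; norm_num)
                                rcases hb11 with h11 | h11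
                                ·
                                  rcases hb15 with h15 | h15
                                  ·
                                    rcases hb13 with h13 | h13
                                    ·
                                      exact absurd ht8 (by rw [h2, h13, h15]; norm_num)
                                    rcases hb4 with h4 | h4
                                    ·
                                      exact absurd ht12 (by rw [h4, h15, h18]; norm_num)
                                    rcases hb6 with h6 | h6
                                    ·
                                      rcases hb20 with h20 | h20
                                      ·
                                        rcases hb25 with h25 | h25
                                        ·
                                          exact absurd ht6 (by rw [h1, h20, h25]; norm_num)
                                        rcases hb22 with h22 | h22
                                        ·
                                          rcases hb17 with h17 | h17
                                          ·
                                            exact absurd ht17 (by rw [h9, h17, h20]; norm_num)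
                                          rcases hb24 with h24 | h24
                                          ·
                                            rcases hb16 with h16 | h16
                                            ·
                                              rcases hb28 with h28 | h28
                                              ·
                                                exact absurd ht9 (by rw [h2, h16, h28]; norm_num)
                                              exact absurd hp70 (by rw [h21, h28]; norm_num)
                                            exact absurd hp62 (by rw [h16, h25]; norm_num)
                                          exact absurd ht19 (by rw [h10, h13, h24]; norm_num)
                                        exact absurd ht16 (by rw [h8, h15, h22]; norm_num)
                                      exact absurd ht13 (by rw [h6, h13, h20]; norm_num)
                                    rcases hb20 with h20 | h20 <;> exact absurd ht13 (by rw [h6, h13, h20]; norm_num)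
                                  rcases hb22 with h22 | h22 <;> exact absurd ht16 (by rw [h8, h15, h22]; norm_num)
                                exact absurd ht15 (by rw [h8, h11, h19]; norm_num)
                              exact absurd hp56 (by rw [h12, h32]; norm_num)
                            exact absurd hp37 (by rw [h7, h29]; norm_num)
                          exact absurd ht11 (by rw [h3, h18, h27]; norm_num)
                        rcases hb27 with h27 | h27 <;> exact absurd ht11 (by rw [h3, h18, h27]; norm_num)
                      exact absurd ht10 (by rw [h3, h10, h30]; norm_num)
                    rcases hb30 with h30 | h30 <;> exact absurd ht10 (by rw [h3, h10, h30]; norm_num)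
                  rcases hb3 with h3 | h3
                  ·
                    rcases hb8 with h8 | h8
                    ·
                      rcases hb32 with h32 | h32
                      ·
                        rcases hb20 with h20 | h20
                        ·
                          rcases hb25 with h25 | h25
                          ·
                            rcases hb11 with h11 | h11
                            ·
                              exact absurd ht15 (by rw [h8, h11, h19]; norm_num)
                            rcases hb17 with h17 | h17
                            ·
                              exact absurd ht17 (by rw [h9, h17, h20]; norm_num)
                            rcases hb28 with h28 | h28
                            ·
                              rcases hb16 with h16 | h16
                              ·
                                exact absurd ht9 (by rw [h2, h16, h28]; norm_num)
                              rcases hb30 with h30 | h30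
                              ·
                                rcases hb10 with h10 | h10
                                ·
                                  exact absurd ht10 (by rw [h3, h10, h30]; norm_num)
                                rcases hb7 with h7 | h7
                                ·
                                  rcases hb13 with h13 | h13
                                  ·
                                    rcases hb15 with h15 | h15
                                    ·
                                      exact absurd ht8 (by rw [h2, h13, h15]; norm_num)
                                    rcases hb4 with h4 | h4
                                    ·
                                      rcases hb18 with h18 | h18
                                      ·
                                        rcases hb27 with h27 | h27
                                        ·
                                          exact absurd ht11 (by rw [h3, h18, h27]; norm_num)
                                        rcases hb6 with h6 | h6
                                        ·
                                          exact absurd ht13 (by rw [h6, h13, h20]; norm_num)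
                                        rcases hb22 with h22 | h22
                                        ·
                                          rcases hb21 with h21 | h21
                                          ·
                                            exact absurd ht18 (by rw [h9, h18, h21]; norm_num)
                                          rcases hb24 with h24 | h24
                                          ·
                                            rcases hb12 with h12 | h12
                                            ·
                                              rcases hb29 with h29 | h29
                                              ·
                                                exact absurd ht7 (by rw [h2, h12, h29]; norm_num)
                                              exact absurd hp66 (by rw [h17, h29]; norm_num)
                                            exact absurd hp54 (by rw [h12, h27]; norm_num)
                                          exact absurd ht19 (by rw [h10, h13, h24]; norm_num)
                                        exact absurd ht16 (by rw [h8, h15, h22]; norm_num)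
                                      exact absurd ht12 (by rw [h4, h15, h18]; norm_num)
                                    rcases hb18 with h18 | h18 <;> exact absurd ht12 (by rw [h4, h15, h18]; norm_num)
                                  rcases hb24 with h24 | h24 <;> exact absurd ht19 (by rw [h10, h13, h24]; norm_num)
                                exact absurd ht14 (by rw [h7, h10, h19]; norm_num)
                              exact absurd hp64 (by rw [h16, h30]; norm_num)
                            exact absurd hp53 (by rw [h11, h28]; norm_num)
                          exact absurd ht6 (by rw [h1, h20, h25]; norm_num)
                        rcases hb25 with h25 | h25 <;> exact absurd ht6 (by rw [h1, h20, h25]; norm_num)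
                      exact absurd ht5 (by rw [h1, h8, h32]; norm_num)
                    rcases hb32 with h32 | h32 <;> exact absurd ht5 (by rw [h1, h8, h32]; norm_num)
                  exact absurd ht4 (by rw [h1, h3, h14]; norm_num)
                exact absurd ht3 (by rw [h0, h23, h26]; norm_num)
              rcases hb26 with h26 | h26 <;> exact absurd ht3 (by rw [h0, h23, h26]; norm_num)
            exact absurd ht2 (by rw [h0, h9, h19]; norm_num)
          rcases hb19 with h19 | h19 <;> exact absurd ht2 (by rw [h0, h9, h19]; norm_num)
        exact absurd ht1 (by rw [h0, h5, h31]; norm_num)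
      rcases hb31 with h31 | h31 <;> exact absurd ht1 (by rw [h0, h5, h31]; norm_num)
    exact absurd ht0 (by rw [h0, h2, h14]; norm_num)
  rcases hb14 with h14 | h14 <;> exact absurd ht0 (by rw [h0, h2, h14]; norm_num)

end KSproof

set_option maxHeartbeats 2000000 in
/-- There is no Kochen–Specker coloring of the symmetric idempotents of `M₃(ℤ[1/30])`,
where `ℤ[1/30]` is the smallest subring of `ℚ` containing `1/30`. -/
theorem no_sym_KS_coloring_M3_Zinv30 :
    ¬ ∃ c : {P : Matrix (Fin 3) (Fin 3) (Subring.closure {(1/30 : ℚ)}) //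
        Pᵀ = P ∧ P * P = P} → Bool, IsSymKSColoring c := by
  rintro ⟨c, hc⟩
  open KSproof in
  ( 
    have hb0 : bi (c E0) = 0 ∨ bi (c E0) = 1 := bi01 _
    have hb1 : bi (c E1) = 0 ∨ bi (c E1) = 1 := bi01 _
    have hb2 : bi (c E2) = 0 ∨ bi (c E2) = 1 := bi01 _
    have hb3 : bi (c E3) = 0 ∨ bi (c E3) = 1 := bi01 _
    have hb4 : bi (c E4) = 0 ∨ bi (c E4) = 1 := bi01 _
    have hb5 : bi (c E5) = 0 ∨ bi (c E5) = 1 := bi01 _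
    have hb6 : bi (c E6) = 0 ∨ bi (c E6) = 1 := bi01 _
    have hb7 : bi (c E7) = 0 ∨ bi (c E7) = 1 := bi01 _
    have hb8 : bi (c E8) = 0 ∨ bi (c E8) = 1 := bi01 _
    have hb9 : bi (c E9) = 0 ∨ bi (c E9) = 1 := bi01 _
    have hb10 : bi (c E10) = 0 ∨ bi (c E10) = 1 := bi01 _
    have hb11 : bi (c E11) = 0 ∨ bi (c E11) = 1 := bi01 _
    have hb12 : bi (c E12) = 0 ∨ bi (c E12) = 1 := bi01 _
    have hb13 : bi (c E13) = 0 ∨ bi (c E13) = 1 := bi01 _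
    have hb14 : bi (c E14) = 0 ∨ bi (c E14) = 1 := bi01 _
    have hb15 : bi (c E15) = 0 ∨ bi (c E15) = 1 := bi01 _
    have hb16 : bi (c E16) = 0 ∨ bi (c E16) = 1 := bi01 _
    have hb17 : bi (c E17) = 0 ∨ bi (c E17) = 1 := bi01 _
    have hb18 : bi (c E18) = 0 ∨ bi (c E18) = 1 := bi01 _
    have hb19 : bi (c E19) = 0 ∨ bi (c E19) = 1 := bi01 _
    have hb20 : bi (c E20) = 0 ∨ bi (c E20) = 1 := bi01 _
    have hb21 : bi (c E21) = 0 ∨ bi (c E21) = 1 := bi01 _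
    have hb22 : bi (c E22) = 0 ∨ bi (c E22) = 1 := bi01 _
    have hb23 : bi (c E23) = 0 ∨ bi (c E23) = 1 := bi01 _
    have hb24 : bi (c E24) = 0 ∨ bi (c E24) = 1 := bi01 _
    have hb25 : bi (c E25) = 0 ∨ bi (c E25) = 1 := bi01 _
    have hb26 : bi (c E26) = 0 ∨ bi (c E26) = 1 := bi01 _
    have hb27 : bi (c E27) = 0 ∨ bi (c E27) = 1 := bi01 _
    have hb28 : bi (c E28) = 0 ∨ bi (c E28) = 1 := bi01 _
    have hb29 : bi (c E29) = 0 ∨ bi (c E29) = 1 := bi01 _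
    have hb30 : bi (c E30) = 0 ∨ bi (c E30) = 1 := bi01 _
    have hb31 : bi (c E31) = 0 ∨ bi (c E31) = 1 := bi01 _
    have hb32 : bi (c E32) = 0 ∨ bi (c E32) = 1 := bi01 _
    have ht0 : bi (c E0) + bi (c E2) + bi (c E14) = 1 := ks_triad hc E0 E2 E14 (mkE_orth (by decide)) (mkE_orth (by decide)) (mkE_orth (by decide)) (mkE_orth (by decide)) (mkE_orth (by decide)) (mkE_orth (by decide)) (mkE_sum (by ext a b; fin_cases a <;> fin_cases b <;> simp [projQ, dotQ, zc, w0, w2, w14, Matrix.one_apply] <;> norm_num))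
    have ht1 : bi (c E0) + bi (c E5) + bi (c E31) = 1 := ks_triad hc E0 E5 E31 (mkE_orth (by decide)) (mkE_orth (by decide)) (mkE_orth (by decide)) (mkE_orth (by decide)) (mkE_orth (by decide)) (mkE_orth (by decide)) (mkE_sum (by ext a b; fin_cases a <;> fin_cases b <;> simp [projQ, dotQ, zc, w0, w5, w31, Matrix.one_apply] <;> norm_num))
    have ht2 : bi (c E0) + bi (c E9) + bi (c E19) = 1 := ks_triad hc E0 E9 E19 (mkE_orth (by decide)) (mkE_orth (by decide)) (mkE_orth (by decide)) (mkE_orth (by decide)) (mkE_orth (by decide)) (mkE_orth (by decide)) (mkE_sum (by ext a b; fin_cases a <;> fin_cases b <;> simp [projQ, dotQ, zc, w0, w9, w19, Matrix.one_apply] <;> norm_num))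
    have ht3 : bi (c E0) + bi (c E23) + bi (c E26) = 1 := ks_triad hc E0 E23 E26 (mkE_orth (by decide)) (mkE_orth (by decide)) (mkE_orth (by decide)) (mkE_orth (by decide)) (mkE_orth (by decide)) (mkE_orth (by decide)) (mkE_sum (by ext a b; fin_cases a <;> fin_cases b <;> simp [projQ, dotQ, zc, w0, w23, w26, Matrix.one_apply] <;> norm_num))
    have ht4 : bi (c E1) + bi (c E3) + bi (c E14) = 1 := ks_triad hc E1 E3 E14 (mkE_orth (by decide)) (mkE_orth (by decide)) (mkE_orth (by decide)) (mkE_orth (by decide)) (mkE_orth (by decide)) (mkE_orth (by decide)) (mkE_sum (by ext a b; fin_cases a <;> fin_cases b <;> simp [projQ, dotQ, zc, w1, w3, w14, Matrix.one_apply] <;> norm_num))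
    have ht5 : bi (c E1) + bi (c E8) + bi (c E32) = 1 := ks_triad hc E1 E8 E32 (mkE_orth (by decide)) (mkE_orth (by decide)) (mkE_orth (by decide)) (mkE_orth (by decide)) (mkE_orth (by decide)) (mkE_orth (by decide)) (mkE_sum (by ext a b; fin_cases a <;> fin_cases b <;> simp [projQ, dotQ, zc, w1, w8, w32, Matrix.one_apply] <;> norm_num))
    have ht6 : bi (c E1) + bi (c E20) + bi (c E25) = 1 := ks_triad hc E1 E20 E25 (mkE_orth (by decide)) (mkE_orth (by decide)) (mkE_orth (by decide)) (mkE_orth (by decide)) (mkE_orth (by decide)) (mkE_orth (by decide)) (mkE_sum (by ext a b; fin_cases a <;> fin_cases b <;> simp [projQ, dotQ, zc, w1, w20, w25, Matrix.one_apply] <;> norm_num))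
    have ht7 : bi (c E2) + bi (c E12) + bi (c E29) = 1 := ks_triad hc E2 E12 E29 (mkE_orth (by decide)) (mkE_orth (by decide)) (mkE_orth (by decide)) (mkE_orth (by decide)) (mkE_orth (by decide)) (mkE_orth (by decide)) (mkE_sum (by ext a b; fin_cases a <;> fin_cases b <;> simp [projQ, dotQ, zc, w2, w12, w29, Matrix.one_apply] <;> norm_num))
    have ht8 : bi (c E2) + bi (c E13) + bi (c E15) = 1 := ks_triad hc E2 E13 E15 (mkE_orth (by decide)) (mkE_orth (by decide)) (mkE_orth (by decide)) (mkE_orth (by decide)) (mkE_orth (by decide)) (mkE_orth (by decide)) (mkE_sum (by ext a b; fin_cases a <;> fin_cases b <;> simp [projQ, dotQ, zc, w2, w13, w15, Matrix.one_apply] <;> norm_num))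
    have ht9 : bi (c E2) + bi (c E16) + bi (c E28) = 1 := ks_triad hc E2 E16 E28 (mkE_orth (by decide)) (mkE_orth (by decide)) (mkE_orth (by decide)) (mkE_orth (by decide)) (mkE_orth (by decide)) (mkE_orth (by decide)) (mkE_sum (by ext a b; fin_cases a <;> fin_cases b <;> simp [projQ, dotQ, zc, w2, w16, w28, Matrix.one_apply] <;> norm_num))
    have ht10 : bi (c E3) + bi (c E10) + bi (c E30) = 1 := ks_triad hc E3 E10 E30 (mkE_orth (by decide)) (mkE_orth (by decide)) (mkE_orth (by decide)) (mkE_orth (by decide)) (mkE_orth (by decide)) (mkE_orth (by decide)) (mkE_sum (by ext a b; fin_cases a <;> fin_cases b <;> simp [projQ, dotQ, zc, w3, w10, w30, Matrix.one_apply] <;> norm_num))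
    have ht11 : bi (c E3) + bi (c E18) + bi (c E27) = 1 := ks_triad hc E3 E18 E27 (mkE_orth (by decide)) (mkE_orth (by decide)) (mkE_orth (by decide)) (mkE_orth (by decide)) (mkE_orth (by decide)) (mkE_orth (by decide)) (mkE_sum (by ext a b; fin_cases a <;> fin_cases b <;> simp [projQ, dotQ, zc, w3, w18, w27, Matrix.one_apply] <;> norm_num))
    have ht12 : bi (c E4) + bi (c E15) + bi (c E18) = 1 := ks_triad hc E4 E15 E18 (mkE_orth (by decide)) (mkE_orth (by decide)) (mkE_orth (by decide)) (mkE_orth (by decide)) (mkE_orth (by decide)) (mkE_orth (by decide)) (mkE_sum (by ext a b; fin_cases a <;> fin_cases b <;> simp [projQ, dotQ, zc, w4, w15, w18, Matrix.one_apply] <;> norm_num))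
    have ht13 : bi (c E6) + bi (c E13) + bi (c E20) = 1 := ks_triad hc E6 E13 E20 (mkE_orth (by decide)) (mkE_orth (by decide)) (mkE_orth (by decide)) (mkE_orth (by decide)) (mkE_orth (by decide)) (mkE_orth (by decide)) (mkE_sum (by ext a b; fin_cases a <;> fin_cases b <;> simp [projQ, dotQ, zc, w6, w13, w20, Matrix.one_apply] <;> norm_num))
    have ht14 : bi (c E7) + bi (c E10) + bi (c E19) = 1 := ks_triad hc E7 E10 E19 (mkE_orth (by decide)) (mkE_orth (by decide)) (mkE_orth (by decide)) (mkE_orth (by decide)) (mkE_orth (by decide)) (mkE_orth (by decide)) (mkE_sum (by ext a b; fin_cases a <;> fin_cases b <;> simp [projQ, dotQ, zc, w7, w10, w19, Matrix.one_apply] <;> norm_num))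
    have ht15 : bi (c E8) + bi (c E11) + bi (c E19) = 1 := ks_triad hc E8 E11 E19 (mkE_orth (by decide)) (mkE_orth (by decide)) (mkE_orth (by decide)) (mkE_orth (by decide)) (mkE_orth (by decide)) (mkE_orth (by decide)) (mkE_sum (by ext a b; fin_cases a <;> fin_cases b <;> simp [projQ, dotQ, zc, w8, w11, w19, Matrix.one_apply] <;> norm_num))
    have ht16 : bi (c E8) + bi (c E15) + bi (c E22) = 1 := ks_triad hc E8 E15 E22 (mkE_orth (by decide)) (mkE_orth (by decide)) (mkE_orth (by decide)) (mkE_orth (by decide)) (mkE_orth (by decide)) (mkE_orth (by decide)) (mkE_sum (by ext a b; fin_cases a <;> fin_cases b <;> simp [projQ, dotQ, zc, w8, w15, w22, Matrix.one_apply] <;> norm_num))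
    have ht17 : bi (c E9) + bi (c E17) + bi (c E20) = 1 := ks_triad hc E9 E17 E20 (mkE_orth (by decide)) (mkE_orth (by decide)) (mkE_orth (by decide)) (mkE_orth (by decide)) (mkE_orth (by decide)) (mkE_orth (by decide)) (mkE_sum (by ext a b; fin_cases a <;> fin_cases b <;> simp [projQ, dotQ, zc, w9, w17, w20, Matrix.one_apply] <;> norm_num))
    have ht18 : bi (c E9) + bi (c E18) + bi (c E21) = 1 := ks_triad hc E9 E18 E21 (mkE_orth (by decide)) (mkE_orth (by decide)) (mkE_orth (by decide)) (mkE_orth (by decide)) (mkE_orth (by decide)) (mkE_orth (by decide)) (mkE_sum (by ext a b; fin_cases a <;> fin_cases b <;> simp [projQ, dotQ, zc, w9, w18, w21, Matrix.one_apply] <;> norm_num))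
    have ht19 : bi (c E10) + bi (c E13) + bi (c E24) = 1 := ks_triad hc E10 E13 E24 (mkE_orth (by decide)) (mkE_orth (by decide)) (mkE_orth (by decide)) (mkE_orth (by decide)) (mkE_orth (by decide)) (mkE_orth (by decide)) (mkE_sum (by ext a b; fin_cases a <;> fin_cases b <;> simp [projQ, dotQ, zc, w10, w13, w24, Matrix.one_apply] <;> norm_num))
    have hp0 : bi (c E0) + bi (c E2) ≤ 1 := ks_pair hc E0 E2 (mkE_orth (by decide)) (mkE_orth (by decide))
    have hp1 : bi (c E0) + bi (c E5) ≤ 1 := ks_pair hc E0 E5 (mkE_orth (by decide)) (mkE_orth (by decide))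
    have hp2 : bi (c E0) + bi (c E9) ≤ 1 := ks_pair hc E0 E9 (mkE_orth (by decide)) (mkE_orth (by decide))
    have hp3 : bi (c E0) + bi (c E14) ≤ 1 := ks_pair hc E0 E14 (mkE_orth (by decide)) (mkE_orth (by decide))
    have hp4 : bi (c E0) + bi (c E19) ≤ 1 := ks_pair hc E0 E19 (mkE_orth (by decide)) (mkE_orth (by decide))
    have hp5 : bi (c E0) + bi (c E23) ≤ 1 := ks_pair hc E0 E23 (mkE_orth (by decide)) (mkE_orth (by decide))
    have hp6 : bi (c E0) + bi (c E26) ≤ 1 := ks_pair hc E0 E26 (mkE_orth (by decide)) (mkE_orth (by decide))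
    have hp7 : bi (c E0) + bi (c E31) ≤ 1 := ks_pair hc E0 E31 (mkE_orth (by decide)) (mkE_orth (by decide))
    have hp8 : bi (c E1) + bi (c E3) ≤ 1 := ks_pair hc E1 E3 (mkE_orth (by decide)) (mkE_orth (by decide))
    have hp9 : bi (c E1) + bi (c E8) ≤ 1 := ks_pair hc E1 E8 (mkE_orth (by decide)) (mkE_orth (by decide))
    have hp10 : bi (c E1) + bi (c E14) ≤ 1 := ks_pair hc E1 E14 (mkE_orth (by decide)) (mkE_orth (by decide))
    have hp11 : bi (c E1) + bi (c E20) ≤ 1 := ks_pair hc E1 E20 (mkE_orth (by decide)) (mkE_orth (by decide))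
    have hp12 : bi (c E1) + bi (c E25) ≤ 1 := ks_pair hc E1 E25 (mkE_orth (by decide)) (mkE_orth (by decide))
    have hp13 : bi (c E1) + bi (c E32) ≤ 1 := ks_pair hc E1 E32 (mkE_orth (by decide)) (mkE_orth (by decide))
    have hp14 : bi (c E2) + bi (c E12) ≤ 1 := ks_pair hc E2 E12 (mkE_orth (by decide)) (mkE_orth (by decide))
    have hp15 : bi (c E2) + bi (c E13) ≤ 1 := ks_pair hc E2 E13 (mkE_orth (by decide)) (mkE_orth (by decide))
    have hp16 : bi (c E2) + bi (c E14) ≤ 1 := ks_pair hc E2 E14 (mkE_orth (by decide)) (mkE_orth (by decide))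
    have hp17 : bi (c E2) + bi (c E15) ≤ 1 := ks_pair hc E2 E15 (mkE_orth (by decide)) (mkE_orth (by decide))
    have hp18 : bi (c E2) + bi (c E16) ≤ 1 := ks_pair hc E2 E16 (mkE_orth (by decide)) (mkE_orth (by decide))
    have hp19 : bi (c E2) + bi (c E28) ≤ 1 := ks_pair hc E2 E28 (mkE_orth (by decide)) (mkE_orth (by decide))
    have hp20 : bi (c E2) + bi (c E29) ≤ 1 := ks_pair hc E2 E29 (mkE_orth (by decide)) (mkE_orth (by decide))
    have hp21 : bi (c E3) + bi (c E10) ≤ 1 := ks_pair hc E3 E10 (mkE_orth (by decide)) (mkE_orth (by decide))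
    have hp22 : bi (c E3) + bi (c E14) ≤ 1 := ks_pair hc E3 E14 (mkE_orth (by decide)) (mkE_orth (by decide))
    have hp23 : bi (c E3) + bi (c E18) ≤ 1 := ks_pair hc E3 E18 (mkE_orth (by decide)) (mkE_orth (by decide))
    have hp24 : bi (c E3) + bi (c E27) ≤ 1 := ks_pair hc E3 E27 (mkE_orth (by decide)) (mkE_orth (by decide))
    have hp25 : bi (c E3) + bi (c E30) ≤ 1 := ks_pair hc E3 E30 (mkE_orth (by decide)) (mkE_orth (by decide))
    have hp26 : bi (c E4) + bi (c E15) ≤ 1 := ks_pair hc E4 E15 (mkE_orth (by decide)) (mkE_orth (by decide))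
    have hp27 : bi (c E4) + bi (c E18) ≤ 1 := ks_pair hc E4 E18 (mkE_orth (by decide)) (mkE_orth (by decide))
    have hp28 : bi (c E4) + bi (c E31) ≤ 1 := ks_pair hc E4 E31 (mkE_orth (by decide)) (mkE_orth (by decide))
    have hp29 : bi (c E5) + bi (c E30) ≤ 1 := ks_pair hc E5 E30 (mkE_orth (by decide)) (mkE_orth (by decide))
    have hp30 : bi (c E5) + bi (c E31) ≤ 1 := ks_pair hc E5 E31 (mkE_orth (by decide)) (mkE_orth (by decide))
    have hp31 : bi (c E5) + bi (c E32) ≤ 1 := ks_pair hc E5 E32 (mkE_orth (by decide)) (mkE_orth (by decide))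
    have hp32 : bi (c E6) + bi (c E13) ≤ 1 := ks_pair hc E6 E13 (mkE_orth (by decide)) (mkE_orth (by decide))
    have hp33 : bi (c E6) + bi (c E20) ≤ 1 := ks_pair hc E6 E20 (mkE_orth (by decide)) (mkE_orth (by decide))
    have hp34 : bi (c E6) + bi (c E31) ≤ 1 := ks_pair hc E6 E31 (mkE_orth (by decide)) (mkE_orth (by decide))
    have hp35 : bi (c E7) + bi (c E10) ≤ 1 := ks_pair hc E7 E10 (mkE_orth (by decide)) (mkE_orth (by decide))
    have hp36 : bi (c E7) + bi (c E19) ≤ 1 := ks_pair hc E7 E19 (mkE_orth (by decide)) (mkE_orth (by decide))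
    have hp37 : bi (c E7) + bi (c E29) ≤ 1 := ks_pair hc E7 E29 (mkE_orth (by decide)) (mkE_orth (by decide))
    have hp38 : bi (c E8) + bi (c E11) ≤ 1 := ks_pair hc E8 E11 (mkE_orth (by decide)) (mkE_orth (by decide))
    have hp39 : bi (c E8) + bi (c E15) ≤ 1 := ks_pair hc E8 E15 (mkE_orth (by decide)) (mkE_orth (by decide))
    have hp40 : bi (c E8) + bi (c E19) ≤ 1 := ks_pair hc E8 E19 (mkE_orth (by decide)) (mkE_orth (by decide))
    have hp41 : bi (c E8) + bi (c E22) ≤ 1 := ks_pair hc E8 E22 (mkE_orth (by decide)) (mkE_orth (by decide))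
    have hp42 : bi (c E8) + bi (c E32) ≤ 1 := ks_pair hc E8 E32 (mkE_orth (by decide)) (mkE_orth (by decide))
    have hp43 : bi (c E9) + bi (c E17) ≤ 1 := ks_pair hc E9 E17 (mkE_orth (by decide)) (mkE_orth (by decide))
    have hp44 : bi (c E9) + bi (c E18) ≤ 1 := ks_pair hc E9 E18 (mkE_orth (by decide)) (mkE_orth (by decide))
    have hp45 : bi (c E9) + bi (c E19) ≤ 1 := ks_pair hc E9 E19 (mkE_orth (by decide)) (mkE_orth (by decide))
    have hp46 : bi (c E9) + bi (c E20) ≤ 1 := ks_pair hc E9 E20 (mkE_orth (by decide)) (mkE_orth (by decide))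
    have hp47 : bi (c E9) + bi (c E21) ≤ 1 := ks_pair hc E9 E21 (mkE_orth (by decide)) (mkE_orth (by decide))
    have hp48 : bi (c E10) + bi (c E13) ≤ 1 := ks_pair hc E10 E13 (mkE_orth (by decide)) (mkE_orth (by decide))
    have hp49 : bi (c E10) + bi (c E19) ≤ 1 := ks_pair hc E10 E19 (mkE_orth (by decide)) (mkE_orth (by decide))
    have hp50 : bi (c E10) + bi (c E24) ≤ 1 := ks_pair hc E10 E24 (mkE_orth (by decide)) (mkE_orth (by decide))
    have hp51 : bi (c E10) + bi (c E30) ≤ 1 := ks_pair hc E10 E30 (mkE_orth (by decide)) (mkE_orth (by decide))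
    have hp52 : bi (c E11) + bi (c E19) ≤ 1 := ks_pair hc E11 E19 (mkE_orth (by decide)) (mkE_orth (by decide))
    have hp53 : bi (c E11) + bi (c E28) ≤ 1 := ks_pair hc E11 E28 (mkE_orth (by decide)) (mkE_orth (by decide))
    have hp54 : bi (c E12) + bi (c E27) ≤ 1 := ks_pair hc E12 E27 (mkE_orth (by decide)) (mkE_orth (by decide))
    have hp55 : bi (c E12) + bi (c E29) ≤ 1 := ks_pair hc E12 E29 (mkE_orth (by decide)) (mkE_orth (by decide))
    have hp56 : bi (c E12) + bi (c E32) ≤ 1 := ks_pair hc E12 E32 (mkE_orth (by decide)) (mkE_orth (by decide))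
    have hp57 : bi (c E13) + bi (c E15) ≤ 1 := ks_pair hc E13 E15 (mkE_orth (by decide)) (mkE_orth (by decide))
    have hp58 : bi (c E13) + bi (c E20) ≤ 1 := ks_pair hc E13 E20 (mkE_orth (by decide)) (mkE_orth (by decide))
    have hp59 : bi (c E13) + bi (c E24) ≤ 1 := ks_pair hc E13 E24 (mkE_orth (by decide)) (mkE_orth (by decide))
    have hp60 : bi (c E15) + bi (c E18) ≤ 1 := ks_pair hc E15 E18 (mkE_orth (by decide)) (mkE_orth (by decide))
    have hp61 : bi (c E15) + bi (c E22) ≤ 1 := ks_pair hc E15 E22 (mkE_orth (by decide)) (mkE_orth (by decide))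
    have hp62 : bi (c E16) + bi (c E25) ≤ 1 := ks_pair hc E16 E25 (mkE_orth (by decide)) (mkE_orth (by decide))
    have hp63 : bi (c E16) + bi (c E28) ≤ 1 := ks_pair hc E16 E28 (mkE_orth (by decide)) (mkE_orth (by decide))
    have hp64 : bi (c E16) + bi (c E30) ≤ 1 := ks_pair hc E16 E30 (mkE_orth (by decide)) (mkE_orth (by decide))
    have hp65 : bi (c E17) + bi (c E20) ≤ 1 := ks_pair hc E17 E20 (mkE_orth (by decide)) (mkE_orth (by decide))
    have hp66 : bi (c E17) + bi (c E29) ≤ 1 := ks_pair hc E17 E29 (mkE_orth (by decide)) (mkE_orth (by decide))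
    have hp67 : bi (c E18) + bi (c E21) ≤ 1 := ks_pair hc E18 E21 (mkE_orth (by decide)) (mkE_orth (by decide))
    have hp68 : bi (c E18) + bi (c E27) ≤ 1 := ks_pair hc E18 E27 (mkE_orth (by decide)) (mkE_orth (by decide))
    have hp69 : bi (c E20) + bi (c E25) ≤ 1 := ks_pair hc E20 E25 (mkE_orth (by decide)) (mkE_orth (by decide))
    have hp70 : bi (c E21) + bi (c E28) ≤ 1 := ks_pair hc E21 E28 (mkE_orth (by decide)) (mkE_orth (by decide))
    have hp71 : bi (c E22) + bi (c E26) ≤ 1 := ks_pair hc E22 E26 (mkE_orth (by decide)) (mkE_orth (by decide))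
    have hp72 : bi (c E23) + bi (c E25) ≤ 1 := ks_pair hc E23 E25 (mkE_orth (by decide)) (mkE_orth (by decide))
    have hp73 : bi (c E23) + bi (c E26) ≤ 1 := ks_pair hc E23 E26 (mkE_orth (by decide)) (mkE_orth (by decide))
    have hp74 : bi (c E23) + bi (c E27) ≤ 1 := ks_pair hc E23 E27 (mkE_orth (by decide)) (mkE_orth (by decide))
    have hp75 : bi (c E24) + bi (c E26) ≤ 1 := ks_pair hc E24 E26 (mkE_orth (by decide)) (mkE_orth (by decide))
    exact core (bi (c E0)) (bi (c E1)) (bi (c E2)) (bi (c E3)) (bi (c E4)) (bi (c E5)) (bi (c E6)) (bi (c E7)) (bi (c E8)) (bi (c E9)) (bi (c E10)) (bi (c E11)) (bi (c E12)) (bi (c E13)) (bi (c E14)) (bi (c E15)) (bi (c E16)) (bi (c E17)) (bi (c E18)) (bi (c E19)) (bi (c E20)) (bi (c E21)) (bi (c E22)) (bi (c E23)) (bi (c E24)) (bi (c E25)) (bi (c E26)) (bi (c E27)) (bi (c E28)) (bi (c E29)) (bi (c E30)) (bi (c E31)) (bi (c E32)) hb0 hb1 hb2 hb3 hb4 hb5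 hb6 hb7 hb8 hb9 hb10 hb11 hb12 hb13 hb14 hb15 hb16 hb17 hb18 hb19 hb20 hb21 hb22 hb23 hb24 hb25 hb26 hb27 hb28 hb29 hb30 hb31 hb32 ht0 ht1 ht2 ht3 ht4 ht5 ht6 ht7 ht8 ht9 ht10 ht11 ht12 ht13 ht14 ht15 ht16 ht17 ht18 ht19 hp0 hp1 hp2 hp3 hp4 hp5 hp6 hp7 hp8 hp9 hp10 hp11 hp12 hp13 hp14 hp15 hp16 hp17 hp18 hp19 hp20 hp21 hp22 hp23 hp24 hp25 hp26 hp27 hp28 hp29 hp30 hp31 hp32 hp33 hp34 hp35 hp36 hp37 hp38 hp39 hp40 hp41 hp42 hp43 hp44 hp45 hp46 hp47 hp48 hp49 hp50 hp51 hp52 hp53 hp54 hp55 hp56 hp57 hp58 hp59 hp60 hp61 hp62 hp63 hp64 hp65 hp66 hp67 hp68 hp69 hp70 hp71 hp72 hp73 hp74 hp75 )
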